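/- Let B₁, B₂ ⊆ B_{ℂ²}(0,1) be balls of radius 0.01 whose centers are at distance 1.2 from each other. Let p⃗₁ = (x₁,y₁) ∈ B₁, p⃗₃ = (x₃,y₃) ∈ B₂, p⃗₂ = (x₂,y₂) ∈ B₂, p⃗₄ = (x₄,y₄) ∈ B₁, and suppose |Δ(p⃗₁, p⃗₂) − Δ(p⃗₃, p⃗₄)| < δ. Define v := ((y₁−y₃)/2, −(x₁−x₃)/2, 1), w := ((y₂−y₄)/2, −(x₂−x₄)/2, 1) ∈ ℂ³, and A(s,t) := ((p⃗₁+p⃗₃)/2 − (p⃗₂+p⃗₄)/2, 0) + s·v − t·w ∈ ℂ³ for s, t ∈ ℂ. Then there exist s, t ∈ ℂ with |s| = |t| ≤ 1/2 and ‖A(s,t)‖ < δ. In particular, the distance between the line segments {((p⃗₁+p⃗₃)/2, 0) + s·v : |s| ≤ 1/2} and {((p⃗₂+p⃗₄)/2, 0) + t·w : |t| ≤ 1/2} is less than δ. -/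

import Mathlib

open Metric
open scoped Classical

noncomputable section

/-- `ℂⁿ` with its Euclidean (Hermitian) metric. -/
abbrev Cspace (n : ℕ) := EuclideanSpace ℂ (Fin n)

/-- The point of `ℂ³` with coordinates `(a, b, c)`. -/
def pt3 (a b c : ℂ) : Cspace 3 :=
  WithLp.toLp 2 (fun i : Fin 3 => if i = 0 then a else if i = 1 then b else c)

/-- The auxiliary complex line `l_{p₁,p₂} ⊆ ℂ³` associated to `p₁, p₂ ∈ ℂ²`. -/
def auxLine (p₁ p₂ : Cspace 2) : Set (Cspace 3) :=
  {w | ∃ z : ℂ, w = pt3 ((p₁ 0 + p₂ 0) / 2 + z * (p₁ 1 - p₂ 1) / 2)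
      ((p₁ 1 + p₂ 1) / 2 - z * (p₁ 0 - p₂ 0) / 2) z}

/-- The tube `T_{q₁,q₂} ⊆ ℂ³` associated to the `δ`-balls `q₁, q₂ ⊆ ℂ²` with centres
`c₁, c₂`: the union of the auxiliary lines over pairs of points of the balls, intersected
with `B_{ℂ³}(0,1)`. -/
def TT (δ : ℝ) (c₁ c₂ : Cspace 2) : Set (Cspace 3) :=
  (⋃ p₁ ∈ closedBall c₁ δ, ⋃ p₂ ∈ closedBall c₂ δ, auxLine p₁ p₂) ∩
    closedBall (0 : Cspace 3) 1

/-- The open line segment `{z • u + t : z ∈ ℂ, |z| < l/2}` in `ℂ³`. -/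
def segC3 (u t : Cspace 3) (l : ℝ) : Set (Cspace 3) :=
  {x | ∃ z : ℂ, ‖z‖ < l / 2 ∧ x = z • u + t}

/-- The complex tube of length `l` and radius `r` in `ℂ³`: the closed `r`-neighbourhood of
the segment `{z • u + t : |z| < l/2}` in the Euclidean metric of `ℂ³ ≅ ℝ⁶`. -/
def tubeC3 (u t : Cspace 3) (l r : ℝ) : Set (Cspace 3) :=
  cthickening r (segC3 u t l)

/-- The complex "distance" `Δ(p₁, p₂) = (x₁ - x₂)² + (y₁ - y₂)²` of two points of `ℂ²`. -/
def cDelta (p₁ p₂ : Cspace 2) : ℂ := (p₁ 0 - p₂ 0) ^ 2 + (p₁ 1 - p₂ 1) ^ 2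

/-- The direction vector `((y₁ - y₂)/2, -(x₁ - x₂)/2, 1) ∈ ℂ³` of the auxiliary line
`l_{p₁,p₂}`. -/
def auxDir (p₁ p₂ : Cspace 2) : Cspace 3 :=
  pt3 ((p₁ 1 - p₂ 1) / 2) (-(p₁ 0 - p₂ 0) / 2) 1

/-- The point `(u⃗, 0) ∈ ℂ³` for `u⃗ ∈ ℂ²`. -/
def liftPt (u : Cspace 2) : Cspace 3 := pt3 (u 0) (u 1) 0

-- coordinate distance bound
lemma coord_dist_le (x y : Cspace 2) (i : Fin 2) : ‖x i - y i‖ ≤ dist x y := by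
  rw [EuclideanSpace.dist_eq, ← dist_eq_norm]
  have h1 : dist (x i) (y i) ^ 2 ≤ ∑ j, dist (x j) (y j) ^ 2 :=
    Finset.single_le_sum (f := fun j => dist (x j) (y j) ^ 2) (fun j _ => sq_nonneg _)
      (Finset.mem_univ i)
  calc dist (x i) (y i) = Real.sqrt (dist (x i) (y i) ^ 2) := (Real.sqrt_sq dist_nonneg).symm
    _ ≤ Real.sqrt (∑ j, dist (x j) (y j) ^ 2) := Real.sqrt_le_sqrt h1

lemma sqlem (a c : ℝ) (ha : 0 ≤ a) (hc : 0 ≤ c) (h : c ≤ a + 0.02) :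
    c ^ 2 - 0.04 * c ≤ a ^ 2 := by
  rcases le_or_gt c 0.04 with h' | h'
  · nlinarith [sq_nonneg a, mul_nonneg hc (by linarith : (0:ℝ) ≤ 0.04 - c)]
  · have h2 : (0:ℝ) ≤ c - 0.02 := by linarith
    nlinarith [mul_self_le_mul_self h2 (by linarith : c - 0.02 ≤ a)]

lemma le_of_sq_le_sq' (a b : ℝ) (hb : 0 ≤ b) (h : a ^ 2 ≤ b ^ 2) : a ≤ b := by
  have h1 := Real.sqrt_le_sqrt h
  rw [Real.sqrt_sq_eq_abs, Real.sqrt_sq hb] at h1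
  exact le_of_abs_le h1

lemma norm4 (z1 z2 z3 z4 : ℂ) : ‖(z1 + z2 - z3 - z4) / 2‖ ≤ (‖z1‖ + ‖z2‖ + ‖z3‖ + ‖z4‖) / 2 := by
  rw [norm_div, Complex.norm_ofNat]
  gcongr
  calc ‖z1 + z2 - z3 - z4‖ ≤ ‖z1 + z2 - z3‖ + ‖z4‖ := norm_sub_le _ _
    _ ≤ (‖z1 + z2‖ + ‖z3‖) + ‖z4‖ := by gcongr; exact norm_sub_le _ _
    _ ≤ ((‖z1‖ + ‖z2‖) + ‖z3‖) + ‖z4‖ := by gcongr; exact norm_add_le _ _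
    _ = ‖z1‖ + ‖z2‖ + ‖z3‖ + ‖z4‖ := by ring

set_option maxHeartbeats 2000000 in
/-- Claim in the proof of Proposition 5.4: the auxiliary lines pass
within distance `δ` of each other. -/
theorem statement14 (δ : ℝ) (hδ : 0 < δ)
    (b₁ b₂ : Cspace 2)
    (hb₁ : closedBall b₁ 0.01 ⊆ closedBall (0 : Cspace 2) 1)
    (hb₂ : closedBall b₂ 0.01 ⊆ closedBall (0 : Cspace 2) 1)
    (hdist : dist b₁ b₂ = 1.2)
    (p₁ p₂ p₃ p₄ : Cspace 2)
    (hp₁ : p₁ ∈ closedBall b₁ 0.01) (hp₃ : p₃ ∈ closedBall b₂ 0.01)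
    (hp₂ : p₂ ∈ closedBall b₂ 0.01) (hp₄ : p₄ ∈ closedBall b₁ 0.01)
    (hΔ : ‖cDelta p₁ p₂ - cDelta p₃ p₄‖ < δ)
    (v w : Cspace 3) (hv : v = auxDir p₁ p₃) (hw : w = auxDir p₂ p₄)
    (A : ℂ → ℂ → Cspace 3)
    (hA : ∀ s t : ℂ,
      A s t = liftPt ((1 / 2 : ℝ) • (p₁ + p₃) - (1 / 2 : ℝ) • (p₂ + p₄)) + s • v - t • w) :
    (∃ s t : ℂ, ‖s‖ = ‖t‖ ∧ ‖t‖ ≤ 1 / 2 ∧ ‖A s t‖ < δ) ∧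
    -- in particular, the two line segments pass within distance `δ` of each other
    (∃ a ∈ {x : Cspace 3 | ∃ s : ℂ, ‖s‖ ≤ 1 / 2 ∧
        x = liftPt ((1 / 2 : ℝ) • (p₁ + p₃)) + s • v},
      ∃ b ∈ {x : Cspace 3 | ∃ t : ℂ, ‖t‖ ≤ 1 / 2 ∧
        x = liftPt ((1 / 2 : ℝ) • (p₂ + p₄)) + t • w},
      dist a b < δ) := by
  have h10 : ‖p₁ 0 - b₁ 0‖ ≤ 0.01 := (coord_dist_le _ _ 0).trans (mem_closedBall.mp hp₁)
  have h11 : ‖p₁ 1 - b₁ 1‖ ≤ 0.01 := (coord_dist_le _ _ 1).trans (mem_closedBall.mp hp₁)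
  have h20 : ‖p₂ 0 - b₂ 0‖ ≤ 0.01 := (coord_dist_le _ _ 0).trans (mem_closedBall.mp hp₂)
  have h21 : ‖p₂ 1 - b₂ 1‖ ≤ 0.01 := (coord_dist_le _ _ 1).trans (mem_closedBall.mp hp₂)
  have h30 : ‖p₃ 0 - b₂ 0‖ ≤ 0.01 := (coord_dist_le _ _ 0).trans (mem_closedBall.mp hp₃)
  have h31 : ‖p₃ 1 - b₂ 1‖ ≤ 0.01 := (coord_dist_le _ _ 1).trans (mem_closedBall.mp hp₃)
  have h40 : ‖p₄ 0 - b₁ 0‖ ≤ 0.01 := (coord_dist_le _ _ 0).trans (mem_closedBall.mp hp₄)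
  have h41 : ‖p₄ 1 - b₁ 1‖ ≤ 0.01 := (coord_dist_le _ _ 1).trans (mem_closedBall.mp hp₄)
  obtain ⟨d1, hd1def⟩ : ∃ z : ℂ, z = (p₁ 0 + p₃ 0 - p₂ 0 - p₄ 0) / 2 := ⟨_, rfl⟩
  obtain ⟨d2, hd2def⟩ : ∃ z : ℂ, z = (p₁ 1 + p₃ 1 - p₂ 1 - p₄ 1) / 2 := ⟨_, rfl⟩
  obtain ⟨f1, hf1def⟩ : ∃ z : ℂ, z = (p₁ 0 - p₃ 0 - p₂ 0 + p₄ 0) / 2 := ⟨_, rfl⟩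
  obtain ⟨f2, hf2def⟩ : ∃ z : ℂ, z = (p₁ 1 - p₃ 1 - p₂ 1 + p₄ 1) / 2 := ⟨_, rfl⟩
  obtain ⟨g1, hg1def⟩ : ∃ z : ℂ, z = b₁ 0 - b₂ 0 := ⟨_, rfl⟩
  obtain ⟨g2, hg2def⟩ : ∃ z : ℂ, z = b₁ 1 - b₂ 1 := ⟨_, rfl⟩
  -- ‖g1‖² + ‖g2‖² = 1.44
  have hg : ‖g1‖ ^ 2 + ‖g2‖ ^ 2 = 1.44 := by
    have h0 : dist b₁ b₂ = Real.sqrt (dist (b₁ 0) (b₂ 0) ^ 2 + dist (b₁ 1) (b₂ 1) ^ 2) := by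
      rw [EuclideanSpace.dist_eq, Fin.sum_univ_two]
    rw [hdist] at h0
    have h1 : dist (b₁ 0) (b₂ 0) ^ 2 + dist (b₁ 1) (b₂ 1) ^ 2 = 1.44 := by
      have h2 : Real.sqrt (dist (b₁ 0) (b₂ 0) ^ 2 + dist (b₁ 1) (b₂ 1) ^ 2) ^ 2 = 1.2 ^ 2 := by
        rw [← h0]
      rw [Real.sq_sqrt (by positivity)] at h2
      norm_num at h2
      linarith
    simpa [dist_eq_norm, hg1def, hg2def] using h1
  -- coordinate bounds
  have hd1 : ‖d1‖ ≤ 0.02 := by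
    have e : d1 = ((p₁ 0 - b₁ 0) + (p₃ 0 - b₂ 0) - (p₂ 0 - b₂ 0) - (p₄ 0 - b₁ 0)) / 2 := by
      rw [hd1def]; ring
    rw [e]; exact le_trans (norm4 _ _ _ _) (by linarith)
  have hd2 : ‖d2‖ ≤ 0.02 := by
    have e : d2 = ((p₁ 1 - b₁ 1) + (p₃ 1 - b₂ 1) - (p₂ 1 - b₂ 1) - (p₄ 1 - b₁ 1)) / 2 := by
      rw [hd2def]; ring
    rw [e]; exact le_trans (norm4 _ _ _ _) (by linarith)
  have hf1g : ‖f1 - g1‖ ≤ 0.02 := by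
    have e : f1 - g1 = ((p₁ 0 - b₁ 0) + (p₄ 0 - b₁ 0) - (p₂ 0 - b₂ 0) - (p₃ 0 - b₂ 0)) / 2 := by
      rw [hf1def, hg1def]; ring
    rw [e]; exact le_trans (norm4 _ _ _ _) (by linarith)
  have hf2g : ‖f2 - g2‖ ≤ 0.02 := by
    have e : f2 - g2 = ((p₁ 1 - b₁ 1) + (p₄ 1 - b₁ 1) - (p₂ 1 - b₂ 1) - (p₃ 1 - b₂ 1)) / 2 := by
      rw [hf2def, hg2def]; ring
    rw [e]; exact le_trans (norm4 _ _ _ _) (by linarith)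
  -- bounds on ‖f‖
  have hg1f : ‖g1‖ ≤ ‖f1‖ + 0.02 := by
    calc ‖g1‖ ≤ ‖f1‖ + ‖g1 - f1‖ := by
          simpa using norm_add_le f1 (g1 - f1)
      _ ≤ ‖f1‖ + 0.02 := by rw [norm_sub_rev] at hf1g; linarith
  have hg2f : ‖g2‖ ≤ ‖f2‖ + 0.02 := by
    calc ‖g2‖ ≤ ‖f2‖ + ‖g2 - f2‖ := by
          simpa using norm_add_le f2 (g2 - f2)
      _ ≤ ‖f2‖ + 0.02 := by rw [norm_sub_rev] at hf2g; linarith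
  have hg1le : ‖g1‖ ≤ 1.2 := le_of_sq_le_sq' _ _ (by norm_num)
    (by linarith [sq_nonneg ‖g2‖, (by norm_num : (1.2:ℝ) ^ 2 = 1.44)])
  have hg2le : ‖g2‖ ≤ 1.2 := le_of_sq_le_sq' _ _ (by norm_num)
    (by linarith [sq_nonneg ‖g1‖, (by norm_num : (1.2:ℝ) ^ 2 = 1.44)])
  have hf1up : ‖f1‖ ≤ 1.22 := by
    calc ‖f1‖ ≤ ‖g1‖ + ‖f1 - g1‖ := by simpa using norm_add_le g1 (f1 - g1)
      _ ≤ 1.22 := by linarith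
  have hf2up : ‖f2‖ ≤ 1.22 := by
    calc ‖f2‖ ≤ ‖g2‖ + ‖f2 - g2‖ := by simpa using norm_add_le g2 (f2 - g2)
      _ ≤ 1.22 := by linarith
  have hce : ‖g1‖ + ‖g2‖ ≤ 1.7 := by
    apply le_of_sq_le_sq' _ _ (by norm_num)
    linarith [sq_nonneg (‖g1‖ - ‖g2‖), (by norm_num : (1.7:ℝ) ^ 2 = 2.89)]
  have hNlow : 1.37 ≤ ‖f1‖ ^ 2 + ‖f2‖ ^ 2 := by
    have s1 := sqlem ‖f1‖ ‖g1‖ (norm_nonneg _) (norm_nonneg _) hg1f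
    have s2 := sqlem ‖f2‖ ‖g2‖ (norm_nonneg _) (norm_nonneg _) hg2f
    linarith
  obtain ⟨N, hNdef⟩ : ∃ r : ℝ, r = ‖f1‖ ^ 2 + ‖f2‖ ^ 2 := ⟨_, rfl⟩
  have hNlow' : 1.37 ≤ N := by rw [hNdef]; exact hNlow
  obtain ⟨K, hKdef⟩ : ∃ z : ℂ, z = f1 * (starRingEnd ℂ) f1 + f2 * (starRingEnd ℂ) f2 := ⟨_, rfl⟩
  have hKN : K = (N : ℂ) := by
    rw [hKdef, hNdef, Complex.mul_conj, Complex.mul_conj]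
    push_cast [Complex.normSq_eq_norm_sq]
    ring
  have hNpos : (0:ℝ) < N := by rw [hNdef]; linarith
  have hK0 : K ≠ 0 := by
    rw [hKN]; exact_mod_cast ne_of_gt hNpos
  have hKnorm : ‖K‖ = N := by rw [hKN, Complex.norm_real, Real.norm_eq_abs, abs_of_pos hNpos]
  obtain ⟨s, hsdef⟩ : ∃ z : ℂ, z = -(d1 * (starRingEnd ℂ) f2 - d2 * (starRingEnd ℂ) f1) / K := ⟨_, rfl⟩
  obtain ⟨P, hPdef⟩ : ∃ z : ℂ, z = d1 * f1 + d2 * f2 := ⟨_, rfl⟩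
  -- the Δ identity
  have hPbound : ‖P‖ < δ / 4 := by
    have e : cDelta p₁ p₂ - cDelta p₃ p₄ = 4 * P := by
      simp only [cDelta, hPdef, hd1def, hd2def, hf1def, hf2def]; ring
    rw [e] at hΔ
    rw [norm_mul, Complex.norm_ofNat] at hΔ
    linarith
  -- the two key complex identities
  have hK0' : f1 * (starRingEnd ℂ) f1 + f2 * (starRingEnd ℂ) f2 ≠ 0 := by
    rw [← hKdef]; exact hK0
  have hu1 : d1 + s * f2 = P * (starRingEnd ℂ) f1 / K := by
    rw [hsdef, hPdef, hKdef]
    rw [eq_div_iff hK0', div_mul_eq_mul_div, add_mul, div_mul_cancel₀ _ hK0']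
    ring
  have hu2 : d2 - s * f1 = P * (starRingEnd ℂ) f2 / K := by
    rw [hsdef, hPdef, hKdef]
    rw [eq_div_iff hK0', div_mul_eq_mul_div, sub_mul, div_mul_cancel₀ _ hK0']
    ring
  -- norm of s
  have hs12 : ‖s‖ ≤ 1 / 2 := by
    have h1 : ‖d1 * (starRingEnd ℂ) f2 - d2 * (starRingEnd ℂ) f1‖ ≤ ‖d1‖ * ‖f2‖ + ‖d2‖ * ‖f1‖ := by
      calc ‖d1 * (starRingEnd ℂ) f2 - d2 * (starRingEnd ℂ) f1‖
          ≤ ‖d1 * (starRingEnd ℂ) f2‖ + ‖d2 * (starRingEnd ℂ) f1‖ := norm_sub_le _ _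
        _ = ‖d1‖ * ‖f2‖ + ‖d2‖ * ‖f1‖ := by
            rw [norm_mul, norm_mul, RCLike.norm_conj, RCLike.norm_conj]
    have h2 : ‖d1‖ * ‖f2‖ + ‖d2‖ * ‖f1‖ ≤ 0.0488 := by
      have m1 : ‖d1‖ * ‖f2‖ ≤ 0.02 * 1.22 :=
        mul_le_mul hd1 hf2up (norm_nonneg _) (by norm_num)
      have m2 : ‖d2‖ * ‖f1‖ ≤ 0.02 * 1.22 :=
        mul_le_mul hd2 hf1up (norm_nonneg _) (by norm_num)
      linarith
    rw [hsdef, norm_div, norm_neg, hKnorm]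
    have h3 : ‖d1 * (starRingEnd ℂ) f2 - d2 * (starRingEnd ℂ) f1‖ / N ≤ 0.0488 / 1.37 :=
      div_le_div₀ (by norm_num) (by linarith) (by norm_num) hNlow'
    linarith
  -- the norm of A s s
  have hApt : A s s = pt3 (d1 + s * f2) (d2 - s * f1) 0 := by
    rw [hA, hv, hw]
    ext i
    fin_cases i <;>
      simp [liftPt, pt3, auxDir, PiLp.add_apply, PiLp.sub_apply, PiLp.smul_apply,
        Complex.real_smul, hd1def, hd2def, hf1def, hf2def] <;>
      push_cast <;> ring
  have hnormA : ‖A s s‖ ≤ ‖P‖ := by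
    have hsq : ‖A s s‖ ^ 2 = ‖d1 + s * f2‖ ^ 2 + ‖d2 - s * f1‖ ^ 2 := by
      rw [hApt, EuclideanSpace.norm_eq,
        Real.sq_sqrt (Finset.sum_nonneg fun i _ => sq_nonneg _)]
      simp [pt3, Fin.sum_univ_three]
    rw [hu1, hu2] at hsq
    have e1 : ‖P * (starRingEnd ℂ) f1 / K‖ = ‖P‖ * ‖f1‖ / N := by
      rw [norm_div, norm_mul, RCLike.norm_conj, hKnorm]
    have e2 : ‖P * (starRingEnd ℂ) f2 / K‖ = ‖P‖ * ‖f2‖ / N := by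
      rw [norm_div, norm_mul, RCLike.norm_conj, hKnorm]
    rw [e1, e2] at hsq
    have hNpos' : (0:ℝ) < N := hNpos
    have heq : ‖A s s‖ ^ 2 = ‖P‖ ^ 2 / N := by
      have hNe : N ≠ 0 := ne_of_gt hNpos
      rw [hsq]
      field_simp
      rw [hNdef]
    have hle : ‖A s s‖ ^ 2 ≤ ‖P‖ ^ 2 := by
      rw [heq]
      exact div_le_self (sq_nonneg _) (by linarith)
    calc ‖A s s‖ = Real.sqrt (‖A s s‖ ^ 2) := (Real.sqrt_sq (norm_nonneg _)).symm
      _ ≤ Real.sqrt (‖P‖ ^ 2) := Real.sqrt_le_sqrt hle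
      _ = ‖P‖ := Real.sqrt_sq (norm_nonneg _)
  have hAδ : ‖A s s‖ < δ := by
    calc ‖A s s‖ ≤ ‖P‖ := hnormA
      _ < δ / 4 := hPbound
      _ ≤ δ := by linarith
  refine ⟨⟨s, s, rfl, hs12, hAδ⟩, ?_⟩
  refine ⟨liftPt ((1 / 2 : ℝ) • (p₁ + p₃)) + s • v, ⟨s, hs12, rfl⟩,
    liftPt ((1 / 2 : ℝ) • (p₂ + p₄)) + s • w, ⟨s, hs12, rfl⟩, ?_⟩
  rw [dist_eq_norm]
  have e : (liftPt ((1 / 2 : ℝ) • (p₁ + p₃)) + s • v) -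
      (liftPt ((1 / 2 : ℝ) • (p₂ + p₄)) + s • w) = A s s := by
    rw [hA]
    ext i
    fin_cases i <;>
      simp [liftPt, pt3, PiLp.add_apply, PiLp.sub_apply, PiLp.smul_apply,
        Complex.real_smul] <;>
      push_cast <;> ring
  rw [e]
  exact hAδ
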